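/- Let Γ = BiCay(H,R,L,S) be a connected bi-Cayley graph over a finite group H, and suppose that the normalizer of R(H) in Aut(Γ) acts transitively on the edges of Γ (i.e. Γ is normal edge-transitive). Then R = L = ∅, and consequently Γ is bipartite with the two orbits H₀ and H₁ of R(H) as its parts. -/

import Mathlib

open SimpleGraph

/-- The bi-Cayley graph `BiCay(H,R,L,S)` on vertex set `H × Bool`,
where `(h, false)` plays the role of `h₀` and `(h, true)` of `h₁`. -/
def biCay (H : Type*) [Group H] (R L S : Set H) : SimpleGraph (H × Bool) where
  Adj a b := a ≠ b ∧
    ((a.2 = false ∧ b.2 = false ∧ b.1 * a.1⁻¹ ∈ R ∧ a.1 * b.1⁻¹ ∈ R) ∨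
     (a.2 = true ∧ b.2 = true ∧ b.1 * a.1⁻¹ ∈ L ∧ a.1 * b.1⁻¹ ∈ L) ∨
     (a.2 = false ∧ b.2 = true ∧ b.1 * a.1⁻¹ ∈ S) ∨
     (a.2 = true ∧ b.2 = false ∧ a.1 * b.1⁻¹ ∈ S))
  symm := ⟨by rintro a b ⟨hne, h⟩; exact ⟨hne.symm, by tauto⟩⟩
  loopless := ⟨by rintro a ⟨hne, _⟩; exact hne rfl⟩

/-- Right multiplication by `g⁻¹` as an automorphism of the bi-Cayley graph;
the range of this homomorphism is the group `R(H)` of all right translations. -/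
def biCayRightMul (H : Type*) [Group H] (R L S : Set H) :
    H →* (biCay H R L S ≃g biCay H R L S) where
  toFun g :=
    { toEquiv := Equiv.prodCongr (Equiv.mulRight g⁻¹) (Equiv.refl Bool)
      map_rel_iff' := by
        intro a b
        simp only [biCay, Equiv.prodCongr_apply, Equiv.coe_mulRight, Equiv.refl_apply,
          Prod.map, ne_eq, Prod.mk.injEq, Prod.ext_iff]
        constructor
        · rintro ⟨hne, h⟩
          refine ⟨by rintro ⟨h1, h2⟩; exact hne ⟨by rw [h1], h2⟩, ?_⟩
          simpa [mul_assoc] using h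
        · rintro ⟨hne, h⟩
          refine ⟨by rintro ⟨h1, h2⟩; exact hne ⟨mul_right_cancel h1, h2⟩, ?_⟩
          simpa [mul_assoc] using h }
  map_one' := by
    apply RelIso.ext; intro x; simp
  map_mul' g₁ g₂ := by
    apply RelIso.ext; intro x
    simp [RelIso.mul_apply, Prod.map, mul_assoc]

/-- The subgroup `R(H)` of right translations inside `Aut(BiCay(H,R,L,S))`. -/
def biCayRH (H : Type*) [Group H] (R L S : Set H) :
    Subgroup (biCay H R L S ≃g biCay H R L S) :=
  (biCayRightMul H R L S).range

/-- If `Γ = BiCay(H,R,L,S)` is a connected bi-Cayley graph over a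
finite group `H` and the normalizer of `R(H)` in `Aut(Γ)` is transitive on the
edges of `Γ`, then `R = L = ∅`, and `Γ` is bipartite with the two copies of `H`
(the orbits `H₀, H₁` of `R(H)`) as its parts. -/

lemma biCayRightMul_apply {H : Type*} [Group H] (R L S : Set H) (g : H) (v : H × Bool) :
    (biCayRightMul H R L S g) v = (v.1 * g⁻¹, v.2) := rfl

lemma biCay_normalizer_parity {H : Type*} [Group H] (R L S : Set H)
    (φ : biCay H R L S ≃g biCay H R L S) (hφ : φ ∈ Subgroup.normalizer (biCayRH H R L S : Set (biCay H R L S ≃g biCay H R L S)))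
    (a b : H × Bool) (hab : a.2 = b.2) : (φ a).2 = (φ b).2 := by
  rw [Subgroup.mem_normalizer_iff] at hφ
  have hg : (biCayRightMul H R L S) (b.1⁻¹ * a.1) ∈ biCayRH H R L S := ⟨_, rfl⟩
  obtain ⟨g', hg'⟩ := (hφ _).mp hg
  have key : (biCayRightMul H R L S g') * φ = φ * (biCayRightMul H R L S (b.1⁻¹ * a.1)) := by
    rw [hg']; group
  have h2 := DFunLike.congr_fun key a
  rw [RelIso.mul_apply, RelIso.mul_apply, biCayRightMul_apply, biCayRightMul_apply] at h2
  have hb : ((a.1 * (b.1⁻¹ * a.1)⁻¹, a.2) : H × Bool) = b := by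
    rw [hab]; simp [mul_assoc]
  rw [hb] at h2
  have h3 := congrArg Prod.snd h2
  exact h3

lemma biCay_walk_cross {H : Type*} [Group H] (R L S : Set H) :
    ∀ {a b : H × Bool}, (biCay H R L S).Walk a b → a.2 ≠ b.2 →
      ∃ u v, (biCay H R L S).Adj u v ∧ u.2 ≠ v.2 := by
  intro a b w
  induction w with
  | nil => intro h; exact absurd rfl h
  | @cons a c b h w ih =>
    intro hne
    by_cases hc : a.2 = c.2
    · exact ih (fun hcb => hne (hc.trans hcb))
    · exact ⟨a, c, h, hc⟩

/-- If `Γ = BiCay(H,R,L,S)` is a connected bi-Cayley graph over a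
finite group `H` and the normalizer of `R(H)` in `Aut(Γ)` is transitive on the
edges of `Γ`, then `R = L = ∅`, and `Γ` is bipartite with the two copies of `H`
(the orbits `H₀, H₁` of `R(H)`) as its parts. -/
theorem biCay_normal_edge_transitive_empty
    {H : Type*} [Group H] [Finite H] (R L S : Set H)
    (hR : R⁻¹ = R) (hL : L⁻¹ = L) (h1 : (1 : H) ∉ R ∪ L)
    (hconn : (biCay H R L S).Connected)
    (hET : ∀ e₁ ∈ (biCay H R L S).edgeSet, ∀ e₂ ∈ (biCay H R L S).edgeSet,
      ∃ φ ∈ Subgroup.normalizer (biCayRH H R L S : Set (biCay H R L S ≃g biCay H R L S)), Sym2.map ⇑φ e₁ = e₂) :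
    R = ∅ ∧ L = ∅ ∧
      ∀ a b : H × Bool, (biCay H R L S).Adj a b → a.2 ≠ b.2 := by
  have hRempty : R = ∅ := by
    rw [Set.eq_empty_iff_forall_notMem]
    intro x hx
    have hx1 : x ≠ 1 := by rintro rfl; exact h1 (Or.inl hx)
    have hxinv : x⁻¹ ∈ R := by rw [← hR]; exact Set.inv_mem_inv.mpr hx
    have hadj : (biCay H R L S).Adj ((1 : H), false) (x, false) := by
      refine ⟨by simp [hx1.symm], Or.inl ⟨rfl, rfl, by simpa using hx, by simpa using hxinv⟩⟩
    obtain ⟨w⟩ := hconn.preconnected ((1 : H), false) ((1 : H), true)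
    obtain ⟨u, v, huv, hne⟩ := biCay_walk_cross R L S w (by simp)
    obtain ⟨φ, hφ, heq⟩ := hET _ ((biCay H R L S).mem_edgeSet.mpr hadj)
      _ ((biCay H R L S).mem_edgeSet.mpr huv)
    rw [Sym2.map_pair_eq, Sym2.eq_iff] at heq
    have hpar := biCay_normalizer_parity R L S φ hφ ((1 : H), false) (x, false) rfl
    rcases heq with ⟨h3, h4⟩ | ⟨h3, h4⟩
    · exact hne (by rw [← h3, ← h4]; exact hpar)
    · exact hne (by rw [← h4, ← h3]; exact hpar.symm)
  have hLempty : L = ∅ := by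
    rw [Set.eq_empty_iff_forall_notMem]
    intro x hx
    have hx1 : x ≠ 1 := by rintro rfl; exact h1 (Or.inr hx)
    have hxinv : x⁻¹ ∈ L := by rw [← hL]; exact Set.inv_mem_inv.mpr hx
    have hadj : (biCay H R L S).Adj ((1 : H), true) (x, true) := by
      refine ⟨by simp [hx1.symm], Or.inr (Or.inl ⟨rfl, rfl, by simpa using hx, by simpa using hxinv⟩)⟩
    obtain ⟨w⟩ := hconn.preconnected ((1 : H), false) ((1 : H), true)
    obtain ⟨u, v, huv, hne⟩ := biCay_walk_cross R L S w (by simp)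
    obtain ⟨φ, hφ, heq⟩ := hET _ ((biCay H R L S).mem_edgeSet.mpr hadj)
      _ ((biCay H R L S).mem_edgeSet.mpr huv)
    rw [Sym2.map_pair_eq, Sym2.eq_iff] at heq
    have hpar := biCay_normalizer_parity R L S φ hφ ((1 : H), true) (x, true) rfl
    rcases heq with ⟨h3, h4⟩ | ⟨h3, h4⟩
    · exact hne (by rw [← h3, ← h4]; exact hpar)
    · exact hne (by rw [← h4, ← h3]; exact hpar.symm)
  refine ⟨hRempty, hLempty, ?_⟩
  rintro a b ⟨hne, h⟩
  subst hRempty; subst hLempty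
  rcases h with ⟨_, _, h, _⟩ | ⟨_, _, h, _⟩ | ⟨ha, hb, _⟩ | ⟨ha, hb, _⟩
  · exact absurd h (Set.notMem_empty _)
  · exact absurd h (Set.notMem_empty _)
  · rw [ha, hb]; simp
  · rw [ha, hb]; simp
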